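/- Under the hypotheses of the previous context (C is u-bounded relative to B), the code Code(B) is u′-bounded relative to the basis (a′₁,…,a′_{k+1}) with u′ = ku, if and only if u ≥ d(1 + 2/k). -/
import Mathlib


open scoped Classical in
noncomputable def wt {F : Type*} [Field F] {m : ℕ} (v : Fin m → F) : ℕ :=
  (Finset.univ.filter fun p => v p ≠ 0).card

/-- `d` is the minimum distance of the linear code `C`. -/
noncomputable def IsMinDist {F : Type*} [Field F] {m : ℕ} (C : Submodule F (Fin m → F)) (d : ℕ) : Prop :=
  (∀ w ∈ C, w ≠ 0 → d ≤ wt w) ∧ ∃ w ∈ C, w ≠ 0 ∧ wt w = d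

/-- The cyclic-shift vectors of Construction 3.2: `shiftVec n k a t` is the vector in
`F^{(k+1)n}` whose `(k+1)` blocks of size `n` are zero in block `t` and the vectors
`a 0, ..., a (k-1)` read cyclically in the remaining blocks. -/
def shiftVec {F : Type*} [Field F] (n k : ℕ) (a : Fin k → Fin n → F) (t : Fin (k + 1)) :
    Fin ((k + 1) * n) → F :=
  fun p =>
    if h : p.val / n = t.val then 0
    else
      have hn : 0 < n := by
        rcases Nat.eq_zero_or_pos n with h0 | h0
        · exact absurd p.isLt (by simp [h0])
        · exact h0
      have hi : p.val / n < k + 1 :=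
        Nat.div_lt_of_lt_mul (Nat.mul_comm (k + 1) n ▸ p.isLt)
      a ⟨(if t.val ≤ p.val / n then p.val / n - t.val else p.val / n + (k + 1) - t.val) - 1,
          by
            have ht := t.isLt
            generalize hq : p.val / n = q at h hi ⊢
            split_ifs with h2 <;> omega⟩
        ⟨p.val % n, Nat.mod_lt _ hn⟩

/-- `C = span a` is `u`-bounded relative to the ordered basis `a`, with minimum distance `d`:
all basis vectors have weight `u`, their sum has weight `d`, and `u ≥ d(1 + 1/k)`. -/
noncomputable def UBounded {F : Type*} [Field F] {n k : ℕ} (a : Fin k → Fin n → F)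
    (u d : ℕ) : Prop :=
  IsMinDist (Submodule.span F (Set.range a)) d ∧
  (∀ j, wt (a j) = u) ∧ wt (∑ j, a j) = d ∧ d * (k + 1) ≤ u * k

section Aux

variable {F : Type*} [Field F] {n k : ℕ}

/-- Embedding of position `i` of block `s` into `Fin ((k+1)*n)`. -/
def emb (n k : ℕ) (s : Fin (k + 1)) (i : Fin n) : Fin ((k + 1) * n) :=
  ⟨s.val * n + i.val, by
    have h1 : s.val * n + i.val < (s.val + 1) * n := by rw [Nat.add_mul, one_mul]; omega
    exact h1.trans_le (Nat.mul_le_mul_right n (by omega))⟩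

lemma emb_div (s : Fin (k + 1)) (i : Fin n) : (emb n k s i).val / n = s.val := by
  have hn : 0 < n := i.pos
  simp [emb, Nat.mul_comm s.val n, Nat.mul_add_div hn, Nat.div_eq_of_lt i.isLt]

lemma emb_mod (s : Fin (k + 1)) (i : Fin n) : (emb n k s i).val % n = i.val := by
  simp [emb, Nat.mul_comm s.val n, Nat.mul_add_mod, Nat.mod_eq_of_lt i.isLt]

lemma emb_inj : Function.Injective (fun q : Fin (k + 1) × Fin n => emb n k q.1 q.2) := by
  rintro ⟨s, i⟩ ⟨s', i'⟩ h
  have h' : emb n k s i = emb n k s' i' := h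
  have h1 : s.val = s'.val := by rw [← emb_div s i, ← emb_div s' i', h']
  have h2 : i.val = i'.val := by rw [← emb_mod s i, ← emb_mod s' i', h']
  exact Prod.ext (Fin.ext h1) (Fin.ext h2)

open scoped Classical in
lemma wt_def {m : ℕ} (v : Fin m → F) : wt v = ∑ p, if v p ≠ 0 then 1 else 0 := by
  classical
  rw [wt, Finset.card_filter]

lemma wt_eq_sum_blocks (v : Fin ((k + 1) * n) → F) :
    wt v = ∑ s : Fin (k + 1), wt (fun i => v (emb n k s i)) := by
  classical
  have hbij : Function.Bijective (fun q : Fin (k + 1) × Fin n => emb n k q.1 q.2) :=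
    (Fintype.bijective_iff_injective_and_card _).mpr ⟨emb_inj, by simp⟩
  rw [wt_def]
  rw [← Fintype.sum_bijective _ hbij
      (fun q : Fin (k + 1) × Fin n => if v (emb n k q.1 q.2) ≠ 0 then 1 else 0)
      (fun p => if v p ≠ 0 then 1 else 0) (fun q => rfl)]
  rw [Fintype.sum_prod_type]
  exact Finset.sum_congr rfl fun s _ => (wt_def _).symm

lemma wt_smul {m : ℕ} {c : F} (hc : c ≠ 0) (v : Fin m → F) : wt (c • v) = wt v := by
  unfold wt
  congr 1
  ext p
  simp [hc]

lemma wt_eq_zero_iff {m : ℕ} (v : Fin m → F) : wt v = 0 ↔ v = 0 := by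
  unfold wt
  simp [Finset.card_eq_zero, Finset.filter_eq_empty_iff, funext_iff]

/-- The index of the basis vector sitting in block `s` of `shiftVec _ _ _ t`. -/
def idxN (k : ℕ) (s t : Fin (k + 1)) : ℕ :=
  (if t.val ≤ s.val then s.val - t.val else s.val + (k + 1) - t.val) - 1

lemma idxN_lt (s t : Fin (k + 1)) (h : s ≠ t) : idxN k s t < k := by
  have hs := s.isLt; have ht := t.isLt
  have hne : s.val ≠ t.val := by simpa [Fin.ext_iff] using h
  unfold idxN; split_ifs <;> omega

/-- Inverse of `idxN`: the block-shift `t` such that `idxN k s t = j`. -/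
def tOf (k : ℕ) (s : Fin (k + 1)) (j : Fin k) : Fin (k + 1) :=
  ⟨if j.val < s.val then s.val - j.val - 1 else s.val + k - j.val, by
    have hs := s.isLt; have hj := j.isLt; split_ifs <;> omega⟩

lemma tOf_ne (s : Fin (k + 1)) (j : Fin k) : tOf k s j ≠ s := by
  have hs := s.isLt; have hj := j.isLt
  simp only [ne_eq, tOf, Fin.ext_iff]
  split_ifs <;> omega

lemma idxN_tOf (s : Fin (k + 1)) (j : Fin k) : idxN k s (tOf k s j) = j.val := by
  have hs := s.isLt; have hj := j.isLt
  simp only [idxN, tOf]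
  split_ifs <;> omega

lemma tOf_idxN (s t : Fin (k + 1)) (h : s ≠ t) :
    tOf k s ⟨idxN k s t, idxN_lt s t h⟩ = t := by
  have hs := s.isLt; have ht := t.isLt
  have hne : s.val ≠ t.val := by simpa [Fin.ext_iff] using h
  simp only [tOf, idxN, Fin.ext_iff]
  split_ifs <;> omega

lemma shiftVec_emb_self (a : Fin k → Fin n → F) (t : Fin (k + 1)) (i : Fin n) :
    shiftVec n k a t (emb n k t i) = 0 := by
  unfold shiftVec
  rw [dif_pos (emb_div t i)]

lemma a_congr (a : Fin k → Fin n → F) {x x' : Fin k} {y y' : Fin n}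
    (hx : x = x') (hy : y = y') : a x y = a x' y' := by rw [hx, hy]

lemma shiftVec_emb_ne (a : Fin k → Fin n → F) {s t : Fin (k + 1)} (h : s ≠ t) (i : Fin n) :
    shiftVec n k a t (emb n k s i) = a ⟨idxN k s t, idxN_lt s t h⟩ i := by
  have hne : (emb n k s i).val / n ≠ t.val := by
    rw [emb_div]; simpa [Fin.ext_iff] using h
  unfold shiftVec
  rw [dif_neg hne]
  refine a_congr a (Fin.ext ?_) (Fin.ext ?_)
  · simp [idxN, emb_div]
  · simp [emb_mod]

lemma block_sum (a : Fin k → Fin n → F) (c : Fin (k + 1) → F) (s : Fin (k + 1)) (i : Fin n) :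
    (∑ t, c t • shiftVec n k a t) (emb n k s i) = ∑ j : Fin k, c (tOf k s j) * a j i := by
  classical
  rw [Finset.sum_apply, ← Finset.add_sum_erase _ _ (Finset.mem_univ s)]
  have h0 : (c s • shiftVec n k a s) (emb n k s i) = 0 := by
    simp [shiftVec_emb_self]
  rw [h0, zero_add]
  refine Finset.sum_bij'
    (fun t ht => (⟨idxN k s t, idxN_lt s t (Ne.symm (Finset.ne_of_mem_erase ht))⟩ : Fin k))
    (fun j _ => tOf k s j) (fun t ht => Finset.mem_univ _)
    (fun j hj => Finset.mem_erase.mpr ⟨tOf_ne s j, Finset.mem_univ _⟩) ?_ ?_ ?_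
  · intro t ht
    exact tOf_idxN s t (Ne.symm (Finset.ne_of_mem_erase ht))
  · intro j hj
    exact Fin.ext (idxN_tOf s j)
  · intro t ht
    have hst : s ≠ t := Ne.symm (Finset.ne_of_mem_erase ht)
    rw [tOf_idxN s t hst, Pi.smul_apply, shiftVec_emb_ne a hst, smul_eq_mul]

lemma block_fun (a : Fin k → Fin n → F) (c : Fin (k + 1) → F) (s : Fin (k + 1)) :
    (fun i => (∑ t, c t • shiftVec n k a t) (emb n k s i))
      = ∑ j, c (tOf k s j) • a j := by
  funext i
  rw [block_sum]
  simp [Finset.sum_apply]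

lemma wt_shiftVec (a : Fin k → Fin n → F) {u : ℕ} (hu : ∀ j, wt (a j) = u) (t : Fin (k + 1)) :
    wt (shiftVec n k a t) = k * u := by
  classical
  rw [wt_eq_sum_blocks, ← Finset.add_sum_erase _ _ (Finset.mem_univ t)]
  have h0 : (fun i => shiftVec n k a t (emb n k t i)) = (0 : Fin n → F) :=
    funext fun i => shiftVec_emb_self a t i
  rw [h0, (wt_eq_zero_iff (0 : Fin n → F)).mpr rfl, zero_add]
  have hcong : ∀ s ∈ Finset.univ.erase t, wt (fun i => shiftVec n k a t (emb n k s i)) = u := by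
    intro s hs
    have hst : s ≠ t := Finset.ne_of_mem_erase hs
    rw [show (fun i => shiftVec n k a t (emb n k s i)) = a ⟨idxN k s t, idxN_lt s t hst⟩ from
      funext fun i => shiftVec_emb_ne a hst i]
    exact hu _
  rw [Finset.sum_congr rfl hcong, Finset.sum_const, Finset.card_erase_of_mem (Finset.mem_univ t)]
  simp [mul_comm]

lemma wt_sum_shiftVec (a : Fin k → Fin n → F) {d : ℕ} (hd : wt (∑ j, a j) = d) :
    wt (∑ t, shiftVec n k a t) = (k + 1) * d := by
  classical
  have h1 : (∑ t, shiftVec n k a t) = ∑ t, (1 : F) • shiftVec n k a t := by simp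
  rw [h1, wt_eq_sum_blocks]
  have hcong : ∀ s ∈ (Finset.univ : Finset (Fin (k + 1))),
      wt (fun i => (∑ t, (1 : F) • shiftVec n k a t) (emb n k s i)) = d := by
    intro s _
    rw [block_fun]
    simpa using hd
  rw [Finset.sum_congr rfl hcong]
  simp [mul_comm]

end Aux

theorem shiftVec_bounded_iff (F : Type*) [Field F] (n k : ℕ)
    (a : Fin k → Fin n → F) (ha : LinearIndependent F a) (u d : ℕ)
    (hb : UBounded a u d) :
    UBounded (shiftVec n k a) (k * u) ((k + 1) * d) ↔ d * (k + 2) ≤ u * k := by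
  classical
  obtain ⟨⟨hlow, w', hw'mem, hw'ne, hw'd⟩, hu, hd, hud⟩ := hb
  have hd1 : 1 ≤ d := by
    have : wt w' ≠ 0 := fun h0 => hw'ne ((wt_eq_zero_iff w').mp h0)
    omega
  have hB : ∀ t, wt (shiftVec n k a t) = k * u := wt_shiftVec a hu
  have hC : wt (∑ t, shiftVec n k a t) = (k + 1) * d := wt_sum_shiftVec a hd
  have ha' := Fintype.linearIndependent_iff.mp ha
  have hA : IsMinDist (Submodule.span F (Set.range (shiftVec n k a))) ((k + 1) * d) := by
    constructor
    · intro w hw hwne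
      obtain ⟨c, hc⟩ := (Submodule.mem_span_range_iff_exists_fun F).mp hw
      by_cases h2 : ∃ t1 t2, t1 ≠ t2 ∧ c t1 ≠ 0 ∧ c t2 ≠ 0
      · obtain ⟨t1, t2, h12, hc1, hc2⟩ := h2
        rw [← hc, wt_eq_sum_blocks]
        calc (k + 1) * d = ∑ _s : Fin (k + 1), d := by simp [mul_comm]
          _ ≤ ∑ s, wt (fun i => (∑ t, c t • shiftVec n k a t) (emb n k s i)) := by
              refine Finset.sum_le_sum fun s _ => ?_
              rw [block_fun]
              set b : Fin n → F := ∑ j, c (tOf k s j) • a j with hb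
              have hbmem : b ∈ Submodule.span F (Set.range a) :=
                Submodule.sum_mem _ fun j _ =>
                  Submodule.smul_mem _ _ (Submodule.subset_span (Set.mem_range_self j))
              have hbne : b ≠ 0 := by
                intro hb0
                obtain ⟨t, hts, hct⟩ : ∃ t, s ≠ t ∧ c t ≠ 0 := by
                  by_cases h1s : t1 = s
                  · exact ⟨t2, fun hst2 => h12 (h1s.trans hst2), hc2⟩
                  · exact ⟨t1, fun hst1 => h1s hst1.symm, hc1⟩
                have := ha' (fun j => c (tOf k s j)) (by rw [← hb]; exact hb0)
                    ⟨idxN k s t, idxN_lt s t hts⟩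
                rw [tOf_idxN s t hts] at this
                exact hct this
              exact hlow b hbmem hbne
      · have hex : ∃ t0, c t0 ≠ 0 := by
          by_contra hall
          push_neg at hall
          exact hwne (by rw [← hc]; simp [hall])
        obtain ⟨t0, ht0⟩ := hex
        have hrest : ∀ t, t ≠ t0 → c t = 0 := by
          intro t ht
          by_contra hne
          exact h2 ⟨t, t0, ht, hne, ht0⟩
        have hw0 : w = c t0 • shiftVec n k a t0 := by
          rw [← hc]
          exact Finset.sum_eq_single t0 (fun t _ ht => by rw [hrest t ht, zero_smul])
            (fun h => absurd (Finset.mem_univ t0) h)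
        rw [hw0, wt_smul ht0, hB t0]
        calc (k + 1) * d = d * (k + 1) := Nat.mul_comm _ _
          _ ≤ u * k := hud
          _ = k * u := Nat.mul_comm _ _
    · refine ⟨∑ t, shiftVec n k a t,
        Submodule.sum_mem _ fun t _ => Submodule.subset_span (Set.mem_range_self t), ?_, hC⟩
      intro h0
      rw [h0, (wt_eq_zero_iff _).mpr rfl] at hC
      have := hC.symm
      rw [Nat.mul_eq_zero] at this
      omega
  constructor
  · rintro ⟨-, -, -, h4⟩
    refine Nat.le_of_mul_le_mul_left ?_ (Nat.succ_pos k)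
    calc (k + 1) * (d * (k + 2)) = ((k + 1) * d) * (k + 1 + 1) := by ring
      _ ≤ (k * u) * (k + 1) := h4
      _ = (k + 1) * (u * k) := by ring
  · intro h
    refine ⟨hA, hB, hC, ?_⟩
    calc ((k + 1) * d) * (k + 1 + 1) = (k + 1) * (d * (k + 2)) := by ring
      _ ≤ (k + 1) * (u * k) := Nat.mul_le_mul_left _ h
      _ = (k * u) * (k + 1) := by ring
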